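/- Let d ≥ 2 be an integer. There exist constants 0 < m ≤ M and an integer N₀ such that for all N ≥ N₀, m · N^{3d−1} ≤ Σ_{λ' ∈ P_{N+1}} ∏_{j=1}^d p_j(λ')² ≤ M · N^{3d−1}. -/

import Mathlib

open Finset

/-- The value after index `i` in `λ`, with the convention `λ_{d+1} := 0`. -/
def nextVal (d : ℕ) (lam : Fin d → ℕ) (i : Fin d) : ℕ :=
  if h : (i : ℕ) + 1 < d then lam ⟨(i : ℕ) + 1, h⟩ else 0

/-- `Λ_M`: nonincreasing `d`-tuples of natural numbers summing to `M`. -/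
def Lam (d M : ℕ) : Finset (Fin d → ℕ) :=
  (Fintype.piFinset fun _ => Finset.range (M + 1)).filter
    (fun lam => (∀ i : Fin d, nextVal d lam i ≤ lam i) ∧ ∑ j, lam j = M)

/-- `P_M`: strictly decreasing `d`-tuples of positive naturals summing to `M`. -/
def PP (d M : ℕ) : Finset (Fin d → ℕ) :=
  (Lam d M).filter (fun lam => ∀ i : Fin d, nextVal d lam i < lam i)

/-- The gaps `p_j(λ) = λ_j - λ_{j+1}`. -/
def pgap (d : ℕ) (lam : Fin d → ℕ) (j : Fin d) : ℕ := lam j - nextVal d lam j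

/-- `S(λ)`: the set of indices `i` with `λ_i > λ_{i+1}`. -/
def SS (d : ℕ) (lam : Fin d → ℕ) : Finset (Fin d) :=
  Finset.univ.filter (fun i => nextVal d lam i < lam i)

/-- `λ - e_i`: decrease the `i`-th entry by one. -/
def dec (d : ℕ) (lam : Fin d → ℕ) (i : Fin d) : Fin d → ℕ :=
  Function.update lam i (lam i - 1)

/-- The previous index `i - 1`. -/
def prev (d : ℕ) (i : Fin d) : Fin d :=
  ⟨(i : ℕ) - 1, Nat.lt_of_le_of_lt (Nat.sub_le _ _) i.isLt⟩

/-- `p_E(λ) = ∏_{j ∉ E} p_j(λ)`. -/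
def pE (d : ℕ) (lam : Fin d → ℕ) (E : Finset (Fin d)) : ℕ :=
  ∏ j ∈ Eᶜ, pgap d lam j

/-- `r_{λ'}(i) = -p_{{i}}(λ') + (p_{{i-1}}(λ') - p_{{i,i-1}}(λ')` if `i > 1`, else `0)`. -/
def rr (d : ℕ) (lam : Fin d → ℕ) (i : Fin d) : ℤ :=
  -(pE d lam {i} : ℤ) +
    (if 0 < (i : ℕ) then
      ((pE d lam {prev d i} : ℤ) - (pE d lam ({i, prev d i} : Finset (Fin d)) : ℤ))
    else 0)

/-- there are `0 < m ≤ M` and `N₀` with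
`m·N^{3d-1} ≤ Σ_{λ'∈P_{N+1}} ∏_j p_j(λ')² ≤ M·N^{3d-1}` for all `N ≥ N₀`. -/
-- auxiliary definitions and lemmas


def lamOf (d : ℕ) (p : Fin d → ℕ) (i : Fin d) : ℕ := ∑ k ∈ Finset.Ici i, p k

lemma nextVal_lamOf (d : ℕ) (p : Fin d → ℕ) (i : Fin d) :
    nextVal d (lamOf d p) i = ∑ k ∈ Finset.Ioi i, p k := by
  unfold nextVal
  split
  · rename_i h
    show lamOf d p _ = _
    unfold lamOf
    congr 1
    ext k
    simp only [Finset.mem_Ici, Finset.mem_Ioi, Fin.le_def, Fin.lt_def]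
    omega
  · rename_i h
    rw [eq_comm, Finset.sum_eq_zero]
    intro k hk
    have hk2 := k.isLt
    rw [Finset.mem_Ioi, Fin.lt_def] at hk
    omega

lemma lamOf_eq_add (d : ℕ) (p : Fin d → ℕ) (i : Fin d) :
    lamOf d p i = p i + nextVal d (lamOf d p) i := by
  rw [nextVal_lamOf]
  unfold lamOf
  rw [← Finset.Ioi_insert i, Finset.sum_insert (by simp)]

lemma pgap_lamOf (d : ℕ) (p : Fin d → ℕ) (i : Fin d) : pgap d (lamOf d p) i = p i := by
  unfold pgap
  rw [lamOf_eq_add]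
  omega

lemma lamOf_injective (d : ℕ) : Function.Injective (lamOf d) := by
  intro p q h
  funext i
  rw [← pgap_lamOf d p i, ← pgap_lamOf d q i, h]

lemma sum_lamOf (d : ℕ) (p : Fin d → ℕ) :
    ∑ i, lamOf d p i = ∑ k : Fin d, ((k : ℕ) + 1) * p k := by
  unfold lamOf
  rw [Finset.sum_comm' (s' := fun k => Finset.Iic k) (t' := Finset.univ)
    (by intro i k; simp [Finset.mem_Ici, Finset.mem_Iic])]
  refine Finset.sum_congr rfl fun k _ => ?_
  rw [Finset.sum_const, smul_eq_mul, Fin.card_Iic]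

lemma mem_PP_lamOf (d M : ℕ) (p : Fin d → ℕ) (hp : ∀ k, 1 ≤ p k)
    (hs : ∑ k : Fin d, ((k : ℕ) + 1) * p k = M) : lamOf d p ∈ PP d M := by
  have hle : ∀ i, lamOf d p i ≤ M := by
    intro i
    rw [← hs, ← sum_lamOf]
    exact Finset.single_le_sum (fun _ _ => Nat.zero_le _) (Finset.mem_univ i)
  have hlt : ∀ i, nextVal d (lamOf d p) i < lamOf d p i := by
    intro i
    have h1 := hp i
    have h2 := lamOf_eq_add d p i
    omega
  rw [PP, Finset.mem_filter, Lam, Finset.mem_filter]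
  refine ⟨⟨?_, fun i => (hlt i).le, ?_⟩, hlt⟩
  · rw [Fintype.mem_piFinset]
    intro i
    rw [Finset.mem_range]
    exact Nat.lt_succ_of_le (hle i)
  · rw [sum_lamOf]; exact hs

lemma of_mem_PP (d M : ℕ) {lam : Fin d → ℕ} (h : lam ∈ PP d M) :
    (∀ i : Fin d, lam i < M + 1) ∧ (∑ j, lam j = M) := by
  rw [PP, Finset.mem_filter, Lam, Finset.mem_filter, Fintype.mem_piFinset] at h
  exact ⟨fun i => Finset.mem_range.mp (h.1.1 i), h.1.2.2⟩

lemma card_PP_le (d M : ℕ) (hd : 1 ≤ d) : (PP d M).card ≤ (M + 1) ^ (d - 1) := by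
  classical
  set l : Fin d := ⟨d - 1, by omega⟩ with hl
  calc (PP d M).card
      ≤ (Fintype.piFinset fun i : Fin d =>
          if (i : ℕ) < d - 1 then Finset.range (M + 1) else ({0} : Finset ℕ)).card := by
        apply Finset.card_le_card_of_injOn
          (fun (lam : Fin d → ℕ) (i : Fin d) => if (i : ℕ) < d - 1 then lam i else 0)
        · intro lam hlam
          rw [Finset.mem_coe, Fintype.mem_piFinset]
          intro i
          by_cases hi : (i : ℕ) < d - 1
          · simp only [hi, if_true]
            exact Finset.mem_range.mpr ((of_mem_PP d M hlam).1 i)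
          · simp [hi]
        · intro lam hlam lam' hlam' hf
          have hsum : ∑ j, lam j = ∑ j, lam' j :=
            (of_mem_PP d M hlam).2.trans (of_mem_PP d M hlam').2.symm
          have hlt : ∀ j : Fin d, (j : ℕ) < d - 1 → lam j = lam' j := by
            intro j hj
            have := congrFun hf j
            simpa [hj] using this
          have herase : ∑ j ∈ Finset.univ.erase l, lam j =
              ∑ j ∈ Finset.univ.erase l, lam' j := by
            refine Finset.sum_congr rfl fun j hj => ?_
            have hne : j ≠ l := (Finset.mem_erase.mp hj).1
            have hj2 := j.isLt
            have hjd : (j : ℕ) ≠ d - 1 := fun hc => hne (Fin.ext hc)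
            exact hlt j (by omega)
          rw [← Finset.add_sum_erase _ _ (Finset.mem_univ l),
            ← Finset.add_sum_erase _ _ (Finset.mem_univ l), herase] at hsum
          have hll : lam l = lam' l := by omega
          funext i
          by_cases hi : (i : ℕ) < d - 1
          · exact hlt i hi
          · have : i = l := Fin.ext (by have := i.isLt; simp only [hl]; omega)
            rw [this, hll]
    _ = (M + 1) ^ (d - 1) := by
        rw [Fintype.card_piFinset]
        have h1 : ∀ i : Fin d,
            (if (i : ℕ) < d - 1 then Finset.range (M + 1) else ({0} : Finset ℕ)).card
            = if (i : ℕ) < d - 1 then M + 1 else 1 := by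
          intro i; split <;> simp
        rw [Finset.prod_congr rfl fun i _ => h1 i, Finset.prod_ite, Finset.prod_const,
          Finset.prod_const_one, mul_one]
        congr 1
        have h2 : Finset.univ.filter (fun i : Fin d => (i : ℕ) < d - 1) = Finset.Iio l := by
          ext j; simp [Fin.lt_def, hl]
        rw [h2, Fin.card_Iio]

def padj (d N : ℕ) (hd : 0 < d) (q : Fin d → ℕ) : Fin d → ℕ :=
  Function.update q ⟨0, hd⟩ (N + 1 - ∑ k : Fin d, ((k : ℕ) + 1) * q k)

set_option maxHeartbeats 1000000 in
theorem stmt10 (d : ℕ) (hd : 2 ≤ d) :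
    ∃ m M : ℝ, 0 < m ∧ m ≤ M ∧ ∃ N₀ : ℕ, ∀ N : ℕ, N₀ ≤ N →
      m * (N : ℝ) ^ (3 * d - 1)
          ≤ (∑ lam' ∈ PP d (N + 1), ∏ j, (pgap d lam' j : ℝ) ^ 2) ∧
      (∑ lam' ∈ PP d (N + 1), ∏ j, (pgap d lam' j : ℝ) ^ 2)
          ≤ M * (N : ℝ) ^ (3 * d - 1) := by
  classical
  have hd0 : 0 < d := by omega
  set c : ℕ := 4 * d * d with hc
  have hc16 : 16 ≤ c := by
    have h1 : 4 * 2 * 2 ≤ 4 * d * d := Nat.mul_le_mul (by omega) hd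
    omega
  have hcR : (1 : ℝ) ≤ 2 * (c : ℝ) := by
    have : (16 : ℝ) ≤ (c : ℝ) := by exact_mod_cast hc16
    linarith
  refine ⟨(1 / (2 * (c : ℝ))) ^ (3 * d - 1), 2 ^ (3 * d - 1), by positivity, ?_, 2 * c, ?_⟩
  · calc (1 / (2 * (c : ℝ))) ^ (3 * d - 1) ≤ 1 ^ (3 * d - 1) := by
          apply pow_le_pow_left₀ (by positivity)
          rw [div_le_one (by linarith)]; linarith
      _ ≤ 2 ^ (3 * d - 1) := by apply pow_le_pow_left₀ <;> norm_num
  intro N hN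
  set K : ℕ := N / c with hK
  have hcpos : 0 < c := by omega
  have hK1 : 1 ≤ K := (Nat.one_le_div_iff hcpos).mpr (by omega)
  have hKc : K * c ≤ N := Nat.div_mul_le_self N c
  set i0 : Fin d := ⟨0, hd0⟩ with hi0
  set B : Finset (Fin d → ℕ) := Fintype.piFinset
    (fun k : Fin d => if (k : ℕ) = 0 then ({0} : Finset ℕ) else Finset.Ico K (2 * K)) with hB
  -- facts about members of B
  have hq0 : ∀ q ∈ B, q i0 = 0 := by
    intro q hq
    rw [hB, Fintype.mem_piFinset] at hq
    have := hq i0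
    simpa [hi0] using this
  have hqk : ∀ q ∈ B, ∀ k : Fin d, k ≠ i0 → K ≤ q k ∧ q k < 2 * K := by
    intro q hq k hk
    rw [hB, Fintype.mem_piFinset] at hq
    have h1 := hq k
    have h2 : (k : ℕ) ≠ 0 := fun hc' => hk (Fin.ext hc')
    rw [if_neg h2, Finset.mem_Ico] at h1
    exact h1
  have hqle : ∀ q ∈ B, ∀ k : Fin d, q k ≤ 2 * K := by
    intro q hq k
    by_cases hk : k = i0
    · rw [hk, hq0 q hq]; omega
    · exact (hqk q hq k hk).2.le
  -- weight sum bound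
  have hW : ∀ q ∈ B, ∑ k : Fin d, ((k : ℕ) + 1) * q k + K + 1 ≤ N + 1 := by
    intro q hq
    have h1 : ∑ k : Fin d, ((k : ℕ) + 1) * q k ≤ d * (d * (2 * K)) := by
      calc ∑ k : Fin d, ((k : ℕ) + 1) * q k ≤ ∑ _k : Fin d, d * (2 * K) := by
            refine Finset.sum_le_sum fun k _ => ?_
            exact Nat.mul_le_mul (by have := k.isLt; omega) (hqle q hq k)
        _ = d * (d * (2 * K)) := by
            rw [Finset.sum_const, Finset.card_univ, Fintype.card_fin, smul_eq_mul]
    have he : d * (d * (2 * K)) = 2 * (K * (d * d)) := by ring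
    have hu4 : 4 * (K * (d * d)) ≤ N := by
      have : K * c = 4 * (K * (d * d)) := by rw [hc]; ring
      omega
    have hKu : K ≤ K * (d * d) := Nat.le_mul_of_pos_right K (by positivity)
    omega
  -- the adjusted tuple
  have hpadj_ne : ∀ q : Fin d → ℕ, ∀ k : Fin d, k ≠ i0 → padj d N hd0 q k = q k := by
    intro q k hk
    rw [padj, Function.update_of_ne hk]
  have hpadj_i0 : ∀ q : Fin d → ℕ,
      padj d N hd0 q i0 = N + 1 - ∑ k : Fin d, ((k : ℕ) + 1) * q k := by
    intro q
    rw [padj, hi0, Function.update_self]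
  have hpadj_ge : ∀ q ∈ B, ∀ k : Fin d, K ≤ padj d N hd0 q k := by
    intro q hq k
    by_cases hk : k = i0
    · rw [hk, hpadj_i0 q]
      have := hW q hq
      omega
    · rw [hpadj_ne q k hk]; exact (hqk q hq k hk).1
  have hsum_padj : ∀ q ∈ B, ∑ k : Fin d, ((k : ℕ) + 1) * padj d N hd0 q k = N + 1 := by
    intro q hq
    have e1 : ∑ k : Fin d, ((k : ℕ) + 1) * q k
        = ∑ k ∈ Finset.univ.erase i0, ((k : ℕ) + 1) * q k := by
      rw [← Finset.add_sum_erase _ _ (Finset.mem_univ i0), hq0 q hq, Nat.mul_zero, Nat.zero_add]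
    have e2 : ∑ k : Fin d, ((k : ℕ) + 1) * padj d N hd0 q k
        = ((i0 : ℕ) + 1) * (N + 1 - ∑ k : Fin d, ((k : ℕ) + 1) * q k)
          + ∑ k ∈ Finset.univ.erase i0, ((k : ℕ) + 1) * q k := by
      rw [← Finset.add_sum_erase _ _ (Finset.mem_univ i0), hpadj_i0 q]
      congr 1
      exact Finset.sum_congr rfl fun k hk' =>
        by rw [hpadj_ne q k (Finset.mem_erase.mp hk').1]
    have h3 := hW q hq
    rw [e2, ← e1]
    simp only [hi0]
    omega
  -- the map into PP
  have hmem : ∀ q ∈ B, lamOf d (padj d N hd0 q) ∈ PP d (N + 1) := by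
    intro q hq
    exact mem_PP_lamOf d (N + 1) _ (fun k => le_trans hK1 (hpadj_ge q hq k)) (hsum_padj q hq)
  have hinj : Set.InjOn (fun q => lamOf d (padj d N hd0 q)) B := by
    intro q hq q' hq' h
    have h2 : padj d N hd0 q = padj d N hd0 q' := lamOf_injective d h
    funext k
    by_cases hk : k = i0
    · rw [hk, hq0 q hq, hq0 q' hq']
    · rw [← hpadj_ne q k hk, ← hpadj_ne q' k hk, h2]
  -- cardinality of B
  have hcardB : B.card = K ^ (d - 1) := by
    rw [hB, Fintype.card_piFinset]
    have h1 : ∀ i : Fin d,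
        (if (i : ℕ) = 0 then ({0} : Finset ℕ) else Finset.Ico K (2 * K)).card
        = if (i : ℕ) = 0 then 1 else K := by
      intro i; split
      · simp
      · rw [Nat.card_Ico]; omega
    rw [Finset.prod_congr rfl fun i _ => h1 i, Finset.prod_ite, Finset.prod_const,
      Finset.prod_const, one_pow, one_mul]
    congr 1
    have h2 : Finset.univ.filter (fun i : Fin d => ¬ (i : ℕ) = 0) = Finset.univ.erase i0 := by
      ext j
      simp [Fin.ext_iff, hi0]
    rw [h2, Finset.card_erase_of_mem (Finset.mem_univ i0), Finset.card_univ, Fintype.card_fin]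
  -- lower bound
  have hKR : (N : ℝ) / (2 * (c : ℝ)) ≤ (K : ℝ) := by
    have hmod := Nat.div_add_mod N c
    rw [← hK] at hmod
    have hmlt : N % c < c := Nat.mod_lt N hcpos
    have hcK : c ≤ c * K := Nat.le_mul_of_pos_right c (by omega)
    have hN2 : N ≤ 2 * (c * K) := by omega
    rw [div_le_iff₀ (by linarith)]
    have h5 : (N : ℝ) ≤ 2 * ((c : ℝ) * (K : ℝ)) := by exact_mod_cast hN2
    linarith
  constructor
  · have hlow : (K : ℝ) ^ (3 * d - 1)
        ≤ ∑ lam' ∈ PP d (N + 1), ∏ j, (pgap d lam' j : ℝ) ^ 2 := by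
      have hsub : Finset.image (fun q => lamOf d (padj d N hd0 q)) B ⊆ PP d (N + 1) := by
        intro x hx
        obtain ⟨q, hq, rfl⟩ := Finset.mem_image.mp hx
        exact hmem q hq
      calc (K : ℝ) ^ (3 * d - 1) = (K : ℝ) ^ (d - 1) * ((K : ℝ) ^ 2) ^ d := by
            rw [← pow_mul, ← pow_add]
            congr 1
            omega
        _ = B.card • ((K : ℝ) ^ 2) ^ d := by rw [hcardB, nsmul_eq_mul]; push_cast; ring
        _ ≤ ∑ q ∈ B, ∏ j, (pgap d (lamOf d (padj d N hd0 q)) j : ℝ) ^ 2 := by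
            apply Finset.card_nsmul_le_sum
            intro q hq
            calc ((K : ℝ) ^ 2) ^ d = ∏ _j : Fin d, (K : ℝ) ^ 2 := by
                  rw [Finset.prod_const, Finset.card_univ, Fintype.card_fin]
              _ ≤ ∏ j, (pgap d (lamOf d (padj d N hd0 q)) j : ℝ) ^ 2 := by
                  apply Finset.prod_le_prod (fun _ _ => by positivity)
                  intro j _
                  rw [pgap_lamOf]
                  have := hpadj_ge q hq j
                  apply pow_le_pow_left₀ (by positivity)
                  exact_mod_cast this
        _ = ∑ lam' ∈ Finset.image (fun q => lamOf d (padj d N hd0 q)) B,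
              ∏ j, (pgap d lam' j : ℝ) ^ 2 := by
              rw [Finset.sum_image (fun q hq q' hq' h => hinj hq hq' h)]
        _ ≤ ∑ lam' ∈ PP d (N + 1), ∏ j, (pgap d lam' j : ℝ) ^ 2 :=
            Finset.sum_le_sum_of_subset_of_nonneg hsub (fun _ _ _ => by positivity)
    calc (1 / (2 * (c : ℝ))) ^ (3 * d - 1) * (N : ℝ) ^ (3 * d - 1)
        = ((N : ℝ) / (2 * (c : ℝ))) ^ (3 * d - 1) := by
          rw [← mul_pow]; congr 1; ring
      _ ≤ (K : ℝ) ^ (3 * d - 1) := by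
          apply pow_le_pow_left₀ (by positivity) hKR
      _ ≤ _ := hlow
  · have hN2 : 2 ≤ N := by omega
    have hcard : ((PP d (N + 1)).card : ℝ) ≤ ((N : ℝ) + 2) ^ (d - 1) := by
      have := card_PP_le d (N + 1) (by omega)
      calc ((PP d (N + 1)).card : ℝ) ≤ ((N + 1 + 1 : ℕ) : ℝ) ^ (d - 1) := by
            exact_mod_cast this
        _ = ((N : ℝ) + 2) ^ (d - 1) := by push_cast; ring
    calc ∑ lam' ∈ PP d (N + 1), ∏ j, (pgap d lam' j : ℝ) ^ 2
        ≤ (PP d (N + 1)).card • (((N : ℝ) + 1) ^ 2) ^ d := by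
          apply Finset.sum_le_card_nsmul
          intro lam hlam
          calc ∏ j, (pgap d lam j : ℝ) ^ 2 ≤ ∏ _j : Fin d, ((N : ℝ) + 1) ^ 2 := by
                apply Finset.prod_le_prod (fun _ _ => by positivity)
                intro j _
                apply pow_le_pow_left₀ (by positivity)
                have h1 : pgap d lam j ≤ lam j := Nat.sub_le _ _
                have h2 : lam j < N + 1 + 1 := (of_mem_PP d (N + 1) hlam).1 j
                have : (pgap d lam j : ℝ) ≤ ((N + 1 : ℕ) : ℝ) := by
                  exact_mod_cast le_trans h1 (by omega)
                push_cast at this ⊢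
                linarith
            _ = (((N : ℝ) + 1) ^ 2) ^ d := by
                rw [Finset.prod_const, Finset.card_univ, Fintype.card_fin]
      _ ≤ ((N : ℝ) + 2) ^ (d - 1) * (((N : ℝ) + 1) ^ 2) ^ d := by
          rw [nsmul_eq_mul]
          apply mul_le_mul_of_nonneg_right hcard (by positivity)
      _ ≤ (2 * (N : ℝ)) ^ (d - 1) * ((2 * (N : ℝ)) ^ 2) ^ d := by
          have hNR : (2 : ℝ) ≤ (N : ℝ) := by exact_mod_cast hN2
          apply mul_le_mul
          · apply pow_le_pow_left₀ (by linarith); linarith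
          · apply pow_le_pow_left₀ (by positivity)
            apply pow_le_pow_left₀ (by linarith); linarith
          · positivity
          · positivity
      _ = 2 ^ (3 * d - 1) * (N : ℝ) ^ (3 * d - 1) := by
          rw [← pow_mul, ← pow_add, mul_pow]
          congr 2 <;> omega
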